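/- Let Λ be a constant n×n complex matrix and let W : ℝ → Matrix (Fin n) (Fin n) ℂ satisfy W′(t) = A(t)·W(t) − W(t)·Λ for all t, with W T-periodic (W(t+T) = W(t) for all t) and W(0) invertible. Then the monodromy matrix satisfies Φ(T) = W(T)·exp(T·Λ)·W(T)⁻¹; in particular Φ(T) is similar to exp(T·Λ). -/

import Mathlib

open Matrix

/-- Instance-polymorphic characterization of `HasDerivAt` for maps into a complex module,
using complex scalar multiplication (which does not depend on the chosen norm). -/
theorem hasDerivAt_iff_tendsto_cslope {E : Type*} [NormedAddCommGroup E] [NormedSpace ℝ E]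
    [Module ℂ E] [IsScalarTower ℝ ℂ E] (f : ℝ → E) (d : E) (t : ℝ) :
    HasDerivAt f d t ↔
      Filter.Tendsto (fun y : ℝ => (((y - t : ℝ) : ℂ))⁻¹ • (f y - f t)) (nhdsWithin t {t}ᶜ)
        (nhds d) := by
  rw [hasDerivAt_iff_tendsto_slope]
  have h : slope f t = fun y : ℝ => (((y - t : ℝ) : ℂ))⁻¹ • (f y - f t) := by
    funext y
    rw [slope_def_module, ← Complex.ofReal_inv, ← smul_one_smul ℂ ((y - t)⁻¹ : ℝ) (f y - f t)]
    congr 1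
    rw [Complex.real_smul, mul_one]
  rw [h]

section MonodromyAux

attribute [local instance] Matrix.linftyOpNormedRing Matrix.linftyOpNormedAlgebra

theorem monodromy_key
    (T : ℝ) (hT : 0 < T) (n : ℕ)
    (A Φ : ℝ → Matrix (Fin n) (Fin n) ℂ)
    (hA : Continuous A)
    (hΦ0 : Φ 0 = 1)
    (hΦ0' : ∀ t : ℝ, Filter.Tendsto (fun y : ℝ => (((y - t : ℝ) : ℂ))⁻¹ • (Φ y - Φ t))
      (nhdsWithin t {t}ᶜ) (nhds (A t * Φ t)))
    (Λ : Matrix (Fin n) (Fin n) ℂ)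
    (W : ℝ → Matrix (Fin n) (Fin n) ℂ)
    (hW0' : ∀ t : ℝ, Filter.Tendsto (fun y : ℝ => (((y - t : ℝ) : ℂ))⁻¹ • (W y - W t))
      (nhdsWithin t {t}ᶜ) (nhds (A t * W t - W t * Λ)))
    (hWT : W T = W 0)
    (hW0 : IsUnit (W 0)) :
    Φ T = W T * NormedSpace.exp ((T : ℂ) • Λ) * (W T)⁻¹ := by
  classical
  have hΦ : ∀ t : ℝ, HasDerivAt Φ (A t * Φ t) t := fun t =>
    (hasDerivAt_iff_tendsto_cslope Φ (A t * Φ t) t).mpr (hΦ0' t)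
  have hW : ∀ t : ℝ, HasDerivAt W (A t * W t - W t * Λ) t := fun t =>
    (hasDerivAt_iff_tendsto_cslope W (A t * W t - W t * Λ) t).mpr (hW0' t)
  -- derivative of the exponential
  have hexp : ∀ t : ℝ, HasDerivAt (fun s : ℝ => NormedSpace.exp ((s : ℂ) • Λ))
      (Λ * NormedSpace.exp ((t : ℂ) • Λ)) t := by
    intro t
    have h0 : HasDerivAt (fun u : ℂ => NormedSpace.exp (u • Λ))
        (Λ * NormedSpace.exp ((t : ℂ) • Λ)) ((t : ℝ) : ℂ) :=
      hasDerivAt_exp_smul_const' (𝕂 := ℂ) Λ (t : ℂ)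
    have h1 := h0.scomp (h := fun y : ℝ => ((y : ℂ))) (hh := Complex.ofRealCLM.hasDerivAt)
    simp only [Function.comp, Complex.ofRealCLM_apply, Complex.ofReal_one, one_smul] at h1
    exact h1
  set Y : ℝ → Matrix (Fin n) (Fin n) ℂ := fun t => W t * NormedSpace.exp ((t : ℂ) • Λ) * (W 0)⁻¹ with hYdef
  have hY : ∀ t : ℝ, HasDerivAt Y (A t * Y t) t := by
    intro t
    have h := ((hW t).mul (hexp t)).mul_const ((W 0)⁻¹)
    have e : A t * Y t = ((A t * W t - W t * Λ) * NormedSpace.exp ((t : ℂ) • Λ)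
        + W t * (Λ * NormedSpace.exp ((t : ℂ) • Λ))) * (W 0)⁻¹ := by
      simp only [hYdef]
      noncomm_ring
    rw [e]
    exact h
  -- Lipschitz bound on [0,T]
  obtain ⟨K, hK⟩ : ∃ K, ∀ s ∈ Set.Icc (0:ℝ) T, ‖A s‖ ≤ K :=
    isCompact_Icc.exists_bound_of_continuousOn hA.continuousOn
  set v : ℝ → Matrix (Fin n) (Fin n) ℂ → Matrix (Fin n) (Fin n) ℂ := fun t x => A (min (max t 0) T) * x with hvdef
  have hmem : ∀ t : ℝ, min (max t 0) T ∈ Set.Icc (0:ℝ) T := fun t =>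
    ⟨le_min (le_max_right _ _) hT.le, min_le_right _ _⟩
  have hv : ∀ t : ℝ, LipschitzWith K.toNNReal (v t) := by
    intro t
    apply LipschitzWith.of_dist_le_mul
    intro x y
    rw [dist_eq_norm, dist_eq_norm, hvdef]
    simp only
    rw [← mul_sub]
    calc ‖A (min (max t 0) T) * (x - y)‖ ≤ ‖A (min (max t 0) T)‖ * ‖x - y‖ := norm_mul_le _ _
      _ ≤ (K.toNNReal : ℝ) * ‖x - y‖ := by
          apply mul_le_mul_of_nonneg_right _ (norm_nonneg _)
          exact (hK _ (hmem t)).trans (Real.le_coe_toNNReal K)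
  have harg : ∀ t ∈ Set.Ico (0:ℝ) T, min (max t 0) T = t := by
    intro t ht
    rw [max_eq_left ht.1, min_eq_left ht.2.le]
  have heqon : Set.EqOn Φ Y (Set.Icc 0 T) := by
    apply ODE_solution_unique hv
    · exact continuousOn_of_forall_continuousAt fun t _ => (hΦ t).continuousAt
    · intro t ht
      have hvt : v t (Φ t) = A t * Φ t := by rw [hvdef]; simp only; rw [harg t ht]
      rw [hvt]
      exact (hΦ t).hasDerivWithinAt
    · exact continuousOn_of_forall_continuousAt fun t _ => (hY t).continuousAt
    · intro t ht
      have hvt : v t (Y t) = A t * Y t := by rw [hvdef]; simp only; rw [harg t ht]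
      rw [hvt]
      exact (hY t).hasDerivWithinAt
    · have hWinv : W 0 * (W 0)⁻¹ = 1 :=
        Matrix.mul_nonsing_inv _ ((Matrix.isUnit_iff_isUnit_det _).mp hW0)
      rw [hΦ0, hYdef]
      simp only
      rw [Complex.ofReal_zero, zero_smul, NormedSpace.exp_zero, mul_one, hWinv]
  have hTfin : Φ T = Y T := heqon ⟨le_of_lt hT, le_rfl⟩
  rw [hTfin, hYdef]
  simp only
  rw [hWT]

end MonodromyAux

attribute [local instance] Matrix.normedAddCommGroup Matrix.normedSpace

/-- If `W′(t) = A(t)W(t) − W(t)Λ`, `W` is `T`-periodic and `W(0)` invertible, then the monodromy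
matrix satisfies `Φ(T) = W(T)·exp(TΛ)·W(T)⁻¹`: it is similar to `exp(TΛ)`. -/
theorem monodromy_similar_exp
    (T : ℝ) (hT : 0 < T) (n : ℕ) (hn : 1 ≤ n)
    (A Φ : ℝ → Matrix (Fin n) (Fin n) ℂ)
    (hA : Continuous A) (hAper : ∀ t : ℝ, A (t + T) = A t)
    (hΦ0 : Φ 0 = 1) (hΦ : ∀ t : ℝ, HasDerivAt Φ (A t * Φ t) t)
    (Λ : Matrix (Fin n) (Fin n) ℂ)
    (W : ℝ → Matrix (Fin n) (Fin n) ℂ)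
    (hW : ∀ t : ℝ, HasDerivAt W (A t * W t - W t * Λ) t)
    (hWper : ∀ t : ℝ, W (t + T) = W t)
    (hW0 : IsUnit (W 0)) :
    Φ T = W T * NormedSpace.exp ((T : ℂ) • Λ) * (W T)⁻¹ := by
  have hWT : W T = W 0 := by have := hWper 0; rwa [zero_add] at this
  exact monodromy_key T hT n A Φ hA hΦ0
    (fun t => (hasDerivAt_iff_tendsto_cslope Φ (A t * Φ t) t).mp (hΦ t))
    Λ W
    (fun t => (hasDerivAt_iff_tendsto_cslope W (A t * W t - W t * Λ) t).mp (hW t))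
    hWT hW0
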